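/- Let X_n be a polynomial mesh of K with constant C_n and cardinality M_n, and let (T_{2n}, w) be a near-exact positive formula with moment residual ε (relative to an orthonormal basis of P_{2n}^d(X_n) for the counting measure), with ε√M_n < 1. Then the weighted least-squares operator ℒ_n^c at (T_{2n}, w) satisfies ‖ℒ_n^c‖ ≤ C_n √M_n β_{M_n}(ε), where β_M(ε) = (1−ε√M)^{−1/2}(1+ε/√M)^{1/2} and ‖·‖ is the uniform operator norm on C(K). -/

import Mathlib

open MvPolynomial

set_option maxHeartbeats 1000000

lemma resid_aux {M N : ℕ} (ψ : Fin N → Fin M → ℝ)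
    (horth : ∀ j k, ∑ i, ψ j i * ψ k i = if j = k then 1 else 0)
    (u : Fin M → ℝ) (g : Fin M → ℝ) (c : Fin N → ℝ)
    (hg : ∀ i, g i = ∑ k, c k * ψ k i) :
    |∑ i, u i * g i - ∑ i, g i| ≤
      Real.sqrt (∑ k, (∑ i, u i * ψ k i - ∑ i, ψ k i) ^ 2) *
        Real.sqrt (∑ i, g i ^ 2) := by
  set e : Fin N → ℝ := fun k => ∑ i, u i * ψ k i - ∑ i, ψ k i with he
  have h1 : ∑ i, u i * g i - ∑ i, g i = ∑ k, c k * e k := by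
    calc ∑ i, u i * g i - ∑ i, g i = ∑ i, (u i - 1) * g i := by
          rw [← Finset.sum_sub_distrib]
          exact Finset.sum_congr rfl fun i _ => by ring
      _ = ∑ i, ∑ k, c k * ((u i - 1) * ψ k i) := by
          refine Finset.sum_congr rfl fun i _ => ?_
          rw [hg, Finset.mul_sum]
          exact Finset.sum_congr rfl fun k _ => by ring
      _ = ∑ k, c k * e k := by
          rw [Finset.sum_comm]
          refine Finset.sum_congr rfl fun k _ => ?_
          rw [← Finset.mul_sum]
          congr 1
          show _ = ∑ i, u i * ψ k i - ∑ i, ψ k i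
          rw [← Finset.sum_sub_distrib]
          exact Finset.sum_congr rfl fun i _ => by ring
  have h2 : ∑ i, g i ^ 2 = ∑ k, c k ^ 2 := by
    calc ∑ i, g i ^ 2 = ∑ i, ∑ k, ∑ l, (c k * c l) * (ψ k i * ψ l i) := by
          refine Finset.sum_congr rfl fun i _ => ?_
          rw [hg, sq, Finset.sum_mul_sum]
          exact Finset.sum_congr rfl fun k _ =>
            Finset.sum_congr rfl fun l _ => by ring
      _ = ∑ k, ∑ l, (c k * c l) * ∑ i, ψ k i * ψ l i := by
          rw [Finset.sum_comm]
          refine Finset.sum_congr rfl fun k _ => ?_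
          rw [Finset.sum_comm]
          exact Finset.sum_congr rfl fun l _ => by rw [Finset.mul_sum]
      _ = ∑ k, c k ^ 2 := by
          refine Finset.sum_congr rfl fun k _ => ?_
          simp [horth, mul_ite, Finset.sum_ite_eq, sq]
  have hcs := Finset.sum_mul_sq_le_sq_mul_sq Finset.univ c e
  rw [h1, ← Real.sqrt_sq_eq_abs, ← Real.sqrt_mul (Finset.sum_nonneg fun _ _ => sq_nonneg _)]
  apply Real.sqrt_le_sqrt
  rw [h2]
  calc (∑ k, c k * e k) ^ 2 ≤ (∑ k, c k ^ 2) * ∑ k, e k ^ 2 := hcs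
    _ = (∑ k, e k ^ 2) * ∑ k, c k ^ 2 := by ring


/-- Proposition 3, first part: if `X_n` is a polynomial mesh of `K` with
constant `C` and cardinality `M`, and `(T_{2n}, w)` (given by the nonzero
entries of `u`) is a near-exact nonnegative formula with moment residual `ε`
(for an orthonormal basis of `P_{2n}^d(X_n)` w.r.t. the counting measure),
`ε√M < 1`, then the weighted least-squares polynomial `p₀` of degree at most
`n` for `f` satisfies `‖p₀‖_{L∞(K)} ≤ C √M β_M(ε) ‖f‖_{L∞(K)}`, where
`β_M(ε) = (1−ε√M)^{-1/2}(1+ε/√M)^{1/2}` and the sup norm of `f` is expressed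
through an arbitrary uniform bound `F`. -/
theorem catchls_operator_norm_mesh
    (d n M N : ℕ) (hM : 0 < M) (K : Set (Fin d → ℝ)) (C : ℝ)
    (x : Fin M → (Fin d → ℝ)) (hx : ∀ i, x i ∈ K)
    (hmesh : ∀ p : MvPolynomial (Fin d) ℝ, p.totalDegree ≤ n → ∀ y ∈ K,
      |eval y p| ≤ C * Finset.univ.sup' ⟨⟨0, hM⟩, Finset.mem_univ _⟩
        (fun i => |eval (x i) p|))
    (ψ : Fin N → (Fin M → ℝ))
    (hψpoly : ∀ k, ∃ q : MvPolynomial (Fin d) ℝ,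
      q.totalDegree ≤ 2 * n ∧ ∀ i, ψ k i = eval (x i) q)
    (horth : ∀ j k, ∑ i, ψ j i * ψ k i = if j = k then 1 else 0)
    (hspan : ∀ q : MvPolynomial (Fin d) ℝ, q.totalDegree ≤ 2 * n →
      ∃ c : Fin N → ℝ, ∀ i, eval (x i) q = ∑ k, c k * ψ k i)
    (u : Fin M → ℝ) (hu : ∀ i, 0 ≤ u i) (ε : ℝ)
    (hres : Real.sqrt (∑ k, (∑ i, u i * ψ k i - ∑ i, ψ k i) ^ 2) = ε)
    (hε : ε * Real.sqrt M < 1)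
    (f : (Fin d → ℝ) → ℝ) (hf : ContinuousOn f K)
    (p₀ : MvPolynomial (Fin d) ℝ) (hp₀ : p₀.totalDegree ≤ n)
    (hmin : ∀ q : MvPolynomial (Fin d) ℝ, q.totalDegree ≤ n →
      ∑ i, u i * (f (x i) - eval (x i) p₀) ^ 2
        ≤ ∑ i, u i * (f (x i) - eval (x i) q) ^ 2)
    (F : ℝ) (hF : ∀ y ∈ K, |f y| ≤ F) :
    ∀ y ∈ K, |eval y p₀|
      ≤ C * Real.sqrt M *
          (Real.sqrt (1 - ε * Real.sqrt M)⁻¹ *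
            Real.sqrt (1 + ε / Real.sqrt M)) * F := by
  intro y hy
  have hε0 : 0 ≤ ε := hres ▸ Real.sqrt_nonneg _
  have hM1 : (1:ℝ) ≤ (M:ℝ) := by exact_mod_cast hM
  have hsM0 : 0 < Real.sqrt M := Real.sqrt_pos.mpr (by linarith)
  have hsM1 : 1 ≤ Real.sqrt M := by
    rw [show (1:ℝ) = Real.sqrt 1 by simp]
    exact Real.sqrt_le_sqrt hM1
  have hden : 0 < 1 - ε * Real.sqrt M := by linarith
  set pv : Fin M → ℝ := fun i => eval (x i) p₀ with hpv
  set S := ∑ i, pv i ^ 2 with hSdef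
  set U := ∑ i, u i * pv i ^ 2 with hUdef
  set W := ∑ i, u i * (f (x i)) ^ 2 with hWdef
  set G := ∑ i, u i * (f (x i) * pv i) with hGdef
  clear_value pv S U W G
  have hS0 : 0 ≤ S := by
    rw [hSdef]; exact Finset.sum_nonneg fun i _ => sq_nonneg _
  have hU0 : 0 ≤ U := by
    rw [hUdef]; exact Finset.sum_nonneg fun i _ => mul_nonneg (hu i) (sq_nonneg _)
  have hW0 : 0 ≤ W := by
    rw [hWdef]; exact Finset.sum_nonneg fun i _ => mul_nonneg (hu i) (sq_nonneg _)
  have hF0 : 0 ≤ F := le_trans (abs_nonneg _) (hF (x ⟨0, hM⟩) (hx _))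
  have hC1 : 1 ≤ C := by
    have h := hmesh 1 (by simp) y hy
    have hs : (Finset.univ.sup' ⟨⟨0, hM⟩, Finset.mem_univ _⟩
        (fun i => |eval (x i) (1 : MvPolynomial (Fin d) ℝ)|)) = 1 :=
      Finset.sup'_eq_of_forall _ _ (fun i _ => by simp)
    simpa using h.trans_eq (congrArg (C * ·) hs)
  -- Step 1: comparison of S and U via moment residual applied to p₀^2
  have hSU : S * (1 - ε * Real.sqrt M) ≤ U := by
    have hdeg : (p₀ * p₀).totalDegree ≤ 2 * n := by
      refine le_trans (MvPolynomial.totalDegree_mul _ _) ?_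
      omega
    obtain ⟨c, hc⟩ := hspan (p₀ * p₀) hdeg
    have hg : ∀ i, pv i ^ 2 = ∑ k, c k * ψ k i := by
      intro i
      simp only [hpv]
      rw [sq, ← eval_mul]
      exact hc i
    have h1 := resid_aux ψ horth u (fun i => pv i ^ 2) c hg
    rw [hres] at h1
    rw [← hUdef, ← hSdef] at h1
    -- bound √(∑ pv^4) ≤ S
    have h4 : ∑ i, (pv i ^ 2) ^ 2 ≤ S ^ 2 := by
      rw [sq S, hSdef, Finset.sum_mul]
      refine Finset.sum_le_sum fun i _ => ?_
      rw [sq (pv i ^ 2)]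
      exact mul_le_mul_of_nonneg_left
        (Finset.single_le_sum (fun j _ => sq_nonneg (pv j)) (Finset.mem_univ i))
        (sq_nonneg _)
    have h5 : Real.sqrt (∑ i, (pv i ^ 2) ^ 2) ≤ S := by
      calc Real.sqrt (∑ i, (pv i ^ 2) ^ 2) ≤ Real.sqrt (S ^ 2) := Real.sqrt_le_sqrt h4
        _ = S := by rw [Real.sqrt_sq hS0]
    have h6 : |U - S| ≤ ε * S :=
      le_trans h1 (mul_le_mul_of_nonneg_left h5 hε0)

    have h7 : S - U ≤ ε * S := by
      have := abs_le.mp h6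
      linarith [this.1]
    have h8 : ε * S ≤ ε * Real.sqrt M * S := by
      nlinarith [mul_nonneg (mul_nonneg hε0 hS0) (sub_nonneg.mpr hsM1)]
    nlinarith [h7, h8]
  -- Step 2: projection property gives G = U, hence U ≤ W
  have key : ∀ s : ℝ, 0 ≤ s ^ 2 * U + 2 * s * (U - G) := by
    intro s
    have hdeg : (MvPolynomial.C (1 + s) * p₀).totalDegree ≤ n := by
      refine le_trans (MvPolynomial.totalDegree_mul _ _) ?_
      rw [MvPolynomial.totalDegree_C, zero_add]
      exact hp₀
    have hq := hmin (MvPolynomial.C (1 + s) * p₀) hdeg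
    have expand : ∀ a : ℝ, ∑ i, u i * (f (x i) - a * pv i) ^ 2
        = W - 2 * a * G + a ^ 2 * U := by
      intro a
      rw [hWdef, hGdef, hUdef, Finset.mul_sum, Finset.mul_sum,
        ← Finset.sum_sub_distrib, ← Finset.sum_add_distrib]
      exact Finset.sum_congr rfl fun i _ => by ring
    have e1 : ∑ i, u i * (f (x i) - eval (x i) p₀) ^ 2 = W - 2 * 1 * G + 1 ^ 2 * U := by
      rw [← expand 1]
      refine Finset.sum_congr rfl fun i _ => ?_
      simp only [hpv]
      ring
    have e2 : ∑ i, u i * (f (x i) - eval (x i) (MvPolynomial.C (1 + s) * p₀)) ^ 2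
        = W - 2 * (1 + s) * G + (1 + s) ^ 2 * U := by
      rw [← expand (1 + s)]
      refine Finset.sum_congr rfl fun i _ => ?_
      simp only [hpv, eval_mul, eval_C]
    rw [e1, e2] at hq
    nlinarith
  have hGU : G = U := by
    have hU1 : 0 < U + 1 := by linarith
    have h := key (-(U - G) / (U + 1))
    have h2 : (-(U - G) / (U + 1)) ^ 2 * U + 2 * (-(U - G) / (U + 1)) * (U - G)
        = -((U - G) ^ 2 * (U + 2)) / (U + 1) ^ 2 := by
      field_simp
      ring
    rw [h2] at h
    have h3 : (U - G) ^ 2 * (U + 2) ≤ 0 := by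
      have hpos : (0:ℝ) < (U + 1) ^ 2 := by positivity
      rw [neg_div, le_neg, neg_zero, div_le_iff₀ hpos] at h
      linarith
    have h4 : (U - G) ^ 2 = 0 :=
      le_antisymm (by nlinarith [h3, hU0, sq_nonneg (U - G)]) (sq_nonneg _)
    have h5 : U - G = 0 := sq_eq_zero_iff.mp h4
    linarith
  have hUW : U ≤ W := by
    have hcs := Finset.sum_mul_sq_le_sq_mul_sq Finset.univ
      (fun i => Real.sqrt (u i) * f (x i)) (fun i => Real.sqrt (u i) * pv i)
    have ea : ∑ i, (Real.sqrt (u i) * f (x i)) * (Real.sqrt (u i) * pv i) = G := by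
      rw [hGdef]
      refine Finset.sum_congr rfl fun i _ => ?_
      rw [show (Real.sqrt (u i) * f (x i)) * (Real.sqrt (u i) * pv i)
        = (Real.sqrt (u i) * Real.sqrt (u i)) * (f (x i) * pv i) by ring,
        Real.mul_self_sqrt (hu i)]
    have eb : ∑ i, (Real.sqrt (u i) * f (x i)) ^ 2 = W := by
      rw [hWdef]
      refine Finset.sum_congr rfl fun i _ => ?_
      rw [mul_pow, Real.sq_sqrt (hu i)]
    have ec : ∑ i, (Real.sqrt (u i) * pv i) ^ 2 = U := by
      rw [hUdef]
      refine Finset.sum_congr rfl fun i _ => ?_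
      rw [mul_pow, Real.sq_sqrt (hu i)]
    rw [ea, eb, ec, hGU, sq] at hcs
    rcases eq_or_lt_of_le hU0 with h | h
    · rw [← h]; exact hW0
    · exact le_of_mul_le_mul_right hcs h
  -- Step 3: bound on W via sum of weights
  have hsumu : ∑ i, u i ≤ (M:ℝ) + ε * Real.sqrt M := by
    obtain ⟨c, hc⟩ := hspan 1 (by simp)
    have hg : ∀ i, (fun _ : Fin M => (1:ℝ)) i = ∑ k, c k * ψ k i := by
      intro i
      simpa using hc i
    have h1 := resid_aux ψ horth u (fun _ => (1:ℝ)) c hg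
    rw [hres] at h1
    simp only [mul_one, one_pow] at h1
    rw [Finset.sum_const, Finset.card_univ, Fintype.card_fin, nsmul_eq_mul, mul_one] at h1
    have := (abs_le.mp h1).2
    linarith
  have hWb : W ≤ ((M:ℝ) + ε * Real.sqrt M) * F ^ 2 := by
    have h1 : W ≤ (∑ i, u i) * F ^ 2 := by
      rw [hWdef, Finset.sum_mul]
      refine Finset.sum_le_sum fun i _ => ?_
      have : (f (x i)) ^ 2 ≤ F ^ 2 := by
        rw [← sq_abs]
        exact pow_le_pow_left₀ (abs_nonneg _) (hF (x i) (hx i)) 2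
      exact mul_le_mul_of_nonneg_left this (hu i)
    refine le_trans h1 ?_
    exact mul_le_mul_of_nonneg_right hsumu (sq_nonneg F)
  -- Combine
  have hMrw : (M:ℝ) + ε * Real.sqrt M = (M:ℝ) * (1 + ε / Real.sqrt M) := by
    have hM' : Real.sqrt M * Real.sqrt M = (M:ℝ) :=
      Real.mul_self_sqrt (by positivity)
    field_simp
    linear_combination ε * hM'
  have hSb : S ≤ ((M:ℝ) * (1 + ε / Real.sqrt M)) * (1 - ε * Real.sqrt M)⁻¹ * F ^ 2 := by
    have h1 : S * (1 - ε * Real.sqrt M) ≤ ((M:ℝ) * (1 + ε / Real.sqrt M)) * F ^ 2 := by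
      rw [← hMrw]
      exact le_trans hSU (le_trans hUW hWb)
    calc S = S * (1 - ε * Real.sqrt M) * (1 - ε * Real.sqrt M)⁻¹ := by
          field_simp
      _ ≤ ((M:ℝ) * (1 + ε / Real.sqrt M)) * F ^ 2 * (1 - ε * Real.sqrt M)⁻¹ :=
          mul_le_mul_of_nonneg_right h1 (by positivity)
      _ = ((M:ℝ) * (1 + ε / Real.sqrt M)) * (1 - ε * Real.sqrt M)⁻¹ * F ^ 2 := by ring
  have hquot : 0 ≤ 1 + ε / Real.sqrt M := by positivity
  have hsupS : (Finset.univ.sup' ⟨⟨0, hM⟩, Finset.mem_univ _⟩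
      (fun i => |eval (x i) p₀|)) ≤ Real.sqrt S := by
    refine Finset.sup'_le _ _ fun i _ => ?_
    calc |eval (x i) p₀| = Real.sqrt ((pv i) ^ 2) := by
          rw [Real.sqrt_sq_eq_abs, hpv]
      _ ≤ Real.sqrt S := by
          refine Real.sqrt_le_sqrt ?_
          rw [hSdef]
          exact Finset.single_le_sum (fun j _ => sq_nonneg (pv j)) (Finset.mem_univ i)
  have hsqrtS : Real.sqrt S ≤ Real.sqrt M *
      (Real.sqrt (1 - ε * Real.sqrt M)⁻¹ * Real.sqrt (1 + ε / Real.sqrt M)) * F := by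
    calc Real.sqrt S
        ≤ Real.sqrt (((M:ℝ) * (1 + ε / Real.sqrt M)) * (1 - ε * Real.sqrt M)⁻¹ * F ^ 2) :=
          Real.sqrt_le_sqrt hSb
      _ = Real.sqrt M * (Real.sqrt (1 - ε * Real.sqrt M)⁻¹ *
            Real.sqrt (1 + ε / Real.sqrt M)) * F := by
          rw [Real.sqrt_mul (by positivity), Real.sqrt_mul (by positivity),
            Real.sqrt_mul (by positivity : (0:ℝ) ≤ (M:ℝ)), Real.sqrt_sq hF0]
          ring
  calc |eval y p₀| ≤ C * Finset.univ.sup' ⟨⟨0, hM⟩, Finset.mem_univ _⟩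
        (fun i => |eval (x i) p₀|) := hmesh p₀ hp₀ y hy
    _ ≤ C * Real.sqrt S := mul_le_mul_of_nonneg_left hsupS (by linarith)
    _ ≤ C * (Real.sqrt M * (Real.sqrt (1 - ε * Real.sqrt M)⁻¹ *
          Real.sqrt (1 + ε / Real.sqrt M)) * F) :=
        mul_le_mul_of_nonneg_left hsqrtS (by linarith)
    _ = C * Real.sqrt M * (Real.sqrt (1 - ε * Real.sqrt M)⁻¹ *
          Real.sqrt (1 + ε / Real.sqrt M)) * F := by ring
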